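/- Let 1 ≤ k ≤ d-1 and let S be a finite collection of caps of radius ρ^d/(1000d) on S^{d-1} with centers e(τ). Suppose that for every k-dimensional subspace H ⊆ ℝ^d, fewer than half the caps in S are contained in N_ρ(H). Then there exist caps τ_1, …, τ_{k+1} ∈ S whose centers satisfy |e(τ_1) ∧ ⋯ ∧ e(τ_{k+1})| ≥ (999/1000)·ρ^k. -/

import Mathlib

open Metric Set
open scoped RealInnerProductSpace
open InnerProductSpace

/-- `|u_1 ∧ ⋯ ∧ u_m|`: the volume of the parallelepiped spanned by `u_1,…,u_m`,
i.e. the square root of the Gram determinant. -/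
noncomputable def gramVol {d m : ℕ} (u : Fin m → EuclideanSpace ℝ (Fin d)) : ℝ :=
  Real.sqrt (Matrix.det (Matrix.of fun i j => (⟪u i, u j⟫ : ℝ)))

/-- The spherical cap of radius `r` centered at `e`. -/
def sphCap {d : ℕ} (e : EuclideanSpace ℝ (Fin d)) (r : ℝ) : Set (EuclideanSpace ℝ (Fin d)) :=
  {u | ‖u‖ = 1 ∧ ‖u - e‖ ≤ r}

instance wfFin (m : ℕ) : WellFoundedLT (Fin m) := inferInstance

lemma gramVol_eq_prod {d m : ℕ} (u : Fin m → EuclideanSpace ℝ (Fin d)) :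
    gramVol u = ∏ i, ‖gramSchmidt ℝ u i‖ := by
  classical
  set g : Fin m → EuclideanSpace ℝ (Fin d) := gramSchmidt ℝ u with hg
  set L : Matrix (Fin m) (Fin m) ℝ := Matrix.of (fun n i =>
    if i = n then 1 else if i < n then ⟪g i, u n⟫ / ‖g i‖ ^ 2 else 0) with hLdef
  have hL : ∀ n i : Fin m, L n i =
      if i = n then 1 else if i < n then ⟪g i, u n⟫ / ‖g i‖ ^ 2 else 0 := fun _ _ => rfl
  have hu : ∀ n, u n = ∑ i, L n i • g i := by
    intro n
    have h1 : ∑ i, L n i • g i = L n n • g n + ∑ i ∈ Finset.univ.erase n, L n i • g i :=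
      (Finset.add_sum_erase _ _ (Finset.mem_univ n)).symm
    have h2 : ∑ i ∈ Finset.univ.erase n, L n i • g i
        = ∑ i ∈ Finset.Iio n, L n i • g i := by
      refine (Finset.sum_subset ?_ ?_).symm
      · intro i hi
        exact Finset.mem_erase.2 ⟨(Finset.mem_Iio.1 hi).ne, Finset.mem_univ i⟩
      · intro i hi hi2
        have h3 : ¬ i < n := fun h => hi2 (Finset.mem_Iio.2 h)
        have h4 : i ≠ n := (Finset.mem_erase.1 hi).1
        rw [hL, if_neg h4, if_neg h3, zero_smul]
    rw [h1, h2, hL, if_pos rfl, one_smul]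
    have h5 : ∀ i ∈ Finset.Iio n, L n i • g i = (⟪g i, u n⟫ / ‖g i‖ ^ 2) • g i := by
      intro i hi
      rw [hL, if_neg (Finset.mem_Iio.1 hi).ne, if_pos (Finset.mem_Iio.1 hi)]
    rw [Finset.sum_congr rfl h5]
    exact gramSchmidt_def'' ℝ u n
  set D : Matrix (Fin m) (Fin m) ℝ := Matrix.diagonal (fun i => ‖g i‖ ^ 2) with hD
  have hGram : (Matrix.of fun i j => (⟪u i, u j⟫ : ℝ)) = L * D * L.transpose := by
    ext a b
    have lhs : (⟪u a, u b⟫ : ℝ) = ∑ i, ∑ j, L a i * (L b j * ⟪g i, g j⟫) := by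
      conv_lhs => rw [hu a, hu b]
      rw [sum_inner]
      refine Finset.sum_congr rfl fun i _ => ?_
      rw [inner_sum]
      refine Finset.sum_congr rfl fun j _ => ?_
      rw [real_inner_smul_left, real_inner_smul_right]
    have diag : ∀ i, ∑ j, L a i * (L b j * ⟪g i, g j⟫) = L a i * (‖g i‖^2 * L b i) := by
      intro i
      rw [Finset.sum_eq_single i]
      · rw [real_inner_self_eq_norm_sq]; ring_nf
      · intro j _ hj
        rw [gramSchmidt_orthogonal ℝ u hj.symm]; ring
      · exact fun h => absurd (Finset.mem_univ i) h
    rw [Matrix.of_apply, lhs, Finset.sum_congr rfl (fun i _ => diag i)]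
    rw [Matrix.mul_assoc, Matrix.mul_apply]
    refine Finset.sum_congr rfl fun i _ => ?_
    rw [Matrix.mul_apply, hD]
    rw [Finset.sum_eq_single i]
    · rw [Matrix.diagonal_apply_eq, Matrix.transpose_apply]
    · intro j _ hj; rw [Matrix.diagonal_apply_ne _ (Ne.symm hj), zero_mul]
    · exact fun h => absurd (Finset.mem_univ i) h
  have hLtri : L.BlockTriangular ⇑OrderDual.toDual := by
    intro i j hij
    have h1 : i < j := hij
    rw [hL, if_neg h1.ne', if_neg (not_lt.2 h1.le)]
  have hdetL : L.det = 1 := by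
    rw [Matrix.det_of_lowerTriangular L hLtri]
    refine Finset.prod_eq_one fun i _ => ?_
    rw [hL, if_pos rfl]
  have hdet : (Matrix.of fun i j => (⟪u i, u j⟫ : ℝ)).det = ∏ i, ‖g i‖ ^ 2 := by
    rw [hGram, Matrix.det_mul, Matrix.det_mul, Matrix.det_transpose, hdetL, hD,
      Matrix.det_diagonal, one_mul, mul_one]
  rw [gramVol, hdet]
  rw [show (∏ i, ‖g i‖ ^ 2) = (∏ i, ‖g i‖) ^ 2 by rw [Finset.prod_pow]]
  exact Real.sqrt_sq (Finset.prod_nonneg fun i _ => norm_nonneg _)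

lemma sub_gramSchmidt_mem_span {d m : ℕ} (u : Fin m → EuclideanSpace ℝ (Fin d)) (n : Fin m) :
    u n - gramSchmidt ℝ u n ∈ Submodule.span ℝ (u '' {l | l < n}) := by
  have h : u n - gramSchmidt ℝ u n = ∑ i ∈ Finset.Iio n,
      ((ℝ ∙ gramSchmidt ℝ u i).starProjection (u n) : EuclideanSpace ℝ (Fin d)) := by
    conv_lhs => rw [gramSchmidt_def' ℝ u n]
    abel
  rw [h]
  refine Submodule.sum_mem _ fun i hi => ?_
  have h1 : (ℝ ∙ gramSchmidt ℝ u i) ≤ Submodule.span ℝ (u '' {l | l < n}) := by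
    rw [Submodule.span_singleton_le_iff_mem]
    refine Submodule.span_mono (Set.image_mono ?_) (gramSchmidt_mem_span ℝ u le_rfl)
    intro l hl
    exact lt_of_le_of_lt hl (Finset.mem_Iio.1 hi)
  exact h1 (Submodule.starProjection_apply_mem _ _)

lemma exists_superset_finrank_eq {K V : Type*} [Field K] [AddCommGroup V] [Module K V]
    [FiniteDimensional K V] (k : ℕ) (V₀ : Submodule K V) (h1 : Module.finrank K V₀ ≤ k)
    (h2 : k ≤ Module.finrank K V) : ∃ H : Submodule K V, V₀ ≤ H ∧ Module.finrank K H = k := by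
  obtain ⟨n, hn⟩ : ∃ n, k - Module.finrank K V₀ = n := ⟨_, rfl⟩
  induction n generalizing V₀ with
  | zero => exact ⟨V₀, le_rfl, by omega⟩
  | succ n ih =>
    have hlt : Module.finrank K V₀ < k := by omega
    obtain ⟨x, hx⟩ := Submodule.exists_of_finrank_lt V₀ (lt_of_lt_of_le hlt h2)
    have hxV : x ∉ V₀ := by simpa using hx 1 one_ne_zero
    have hx0 : x ≠ 0 := fun h => hxV (h ▸ V₀.zero_mem)
    have hinf : V₀ ⊓ (K ∙ x) = ⊥ := by
      rw [eq_bot_iff]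
      rintro y ⟨hy1, hy2⟩
      obtain ⟨c, rfl⟩ := Submodule.mem_span_singleton.1 hy2
      rcases eq_or_ne c 0 with rfl | hc
      · simp
      · exact absurd hy1 (hx c hc)
    have hrank : Module.finrank K (V₀ ⊔ K ∙ x : Submodule K V) = Module.finrank K V₀ + 1 := by
      have h3 := Submodule.finrank_sup_add_finrank_inf_eq V₀ (K ∙ x)
      rw [hinf, finrank_bot, finrank_span_singleton hx0] at h3
      omega
    obtain ⟨H, hH1, hH2⟩ := ih (V₀ ⊔ K ∙ x) (by omega) (by omega)
    exact ⟨H, le_trans le_sup_left hH1, hH2⟩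

/-- If no `k`-dimensional subspace `H` has half the caps of `S` inside `N_ρ(H)`, then
there are `k+1` caps in `S` whose centers satisfy
`|e(τ_1) ∧ ⋯ ∧ e(τ_{k+1})| ≥ (999/1000)·ρ^k`. -/
theorem stmt_6 (d k : ℕ) (hk : 1 ≤ k) (hkd : k ≤ d - 1) (ρ : ℝ) (hρ : ρ ∈ Ioo (0 : ℝ) 1)
    (S : Finset (EuclideanSpace ℝ (Fin d))) (hS : ∀ e ∈ S, ‖e‖ = 1)
    (hnarrow : ∀ H : Submodule ℝ (EuclideanSpace ℝ (Fin d)), Module.finrank ℝ H = k →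
      2 * ({e ∈ (S : Set (EuclideanSpace ℝ (Fin d))) |
        sphCap e (ρ ^ d / (1000 * d)) ⊆ {x | Metric.infDist x H ≤ ρ}}.ncard : ℝ) < S.card) :
    ∃ τ : Fin (k + 1) → EuclideanSpace ℝ (Fin d), (∀ j, τ j ∈ S) ∧
      (999 / 1000 : ℝ) * ρ ^ k ≤ gramVol τ := by
  classical
  have hd2 : 2 ≤ d := by omega
  have hkd' : k + 1 ≤ d := by omega
  obtain ⟨hρ0, hρ1⟩ := hρ
  set r : ℝ := ρ ^ d / (1000 * d) with hrdef
  set c : ℝ := 1 / (1000 * d) with hcdef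
  set ρ' : ℝ := ρ * (1 - c) with hρ'def
  have hdR : (2:ℝ) ≤ (d:ℝ) := by exact_mod_cast hd2
  have hd0 : (0:ℝ) < 1000 * d := by positivity
  have hc0 : 0 < c := by positivity
  have hc1 : c ≤ 1/2000 := by
    rw [hcdef, div_le_div_iff₀ hd0 (by norm_num)]
    nlinarith
  have hρ'nonneg : 0 ≤ ρ' := by nlinarith
  have hρ'le : ρ' ≤ ρ - r := by
    have h1 : ρ ^ d ≤ ρ := by
      calc ρ ^ d ≤ ρ ^ 1 := pow_le_pow_of_le_one hρ0.le hρ1.le (by omega)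
        _ = ρ := pow_one ρ
    have h2 : r = ρ ^ d * c := by rw [hrdef, hcdef]; ring
    have h3 : ρ' = ρ - ρ * c := by rw [hρ'def]; ring
    nlinarith
  -- greedy construction
  have main : ∀ m : ℕ, m ≤ k + 1 → ∃ τ : Fin m → EuclideanSpace ℝ (Fin d),
      (∀ i, τ i ∈ S) ∧ ∀ (i : Fin m) (w : EuclideanSpace ℝ (Fin d)),
        w ∈ Submodule.span ℝ (τ '' {l | l < i}) → ρ' ≤ ‖τ i - w‖ := by
    intro m
    induction m with
    | zero => exact fun _ => ⟨Fin.elim0, fun i => i.elim0, fun i => i.elim0⟩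
    | succ m ih =>
      intro hm
      obtain ⟨τ, hτS, hτ⟩ := ih (by omega)
      set V := Submodule.span ℝ (Set.range τ) with hVdef
      have hVrank : Module.finrank ℝ V ≤ m := by
        rw [hVdef]
        refine le_trans (finrank_span_le_card (R := ℝ) (Set.range τ)) ?_
        rw [Set.toFinset_range]
        exact le_trans Finset.card_image_le (by simp)
      obtain ⟨H, hVH, hHrank⟩ := exists_superset_finrank_eq k V (by omega)
        (by rw [finrank_euclideanSpace, Fintype.card_fin]; omega)
      obtain ⟨e, heS, hecap⟩ : ∃ e ∈ S, ¬ sphCap e r ⊆ {x | infDist x (H : Set (EuclideanSpace ℝ (Fin d))) ≤ ρ} := by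
        by_contra hcon
        push_neg at hcon
        have heq : {e ∈ (S : Set (EuclideanSpace ℝ (Fin d))) |
            sphCap e r ⊆ {x | infDist x (H : Set (EuclideanSpace ℝ (Fin d))) ≤ ρ}}
            = (S : Set (EuclideanSpace ℝ (Fin d))) := by
          ext e
          exact ⟨fun h => h.1, fun h => ⟨h, hcon e h⟩⟩
        have hn := hnarrow H hHrank
        rw [heq, Set.ncard_coe_finset] at hn
        have : (0:ℝ) ≤ (S.card : ℝ) := Nat.cast_nonneg _
        linarith
      obtain ⟨x, hx, hxH⟩ := not_subset.1 hecap
      have hworks : ∀ w ∈ H, ρ' ≤ ‖e - w‖ := by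
        intro w hw
        have h1 : ρ < dist x w :=
          lt_of_lt_of_le (not_le.1 hxH) (infDist_le_dist_of_mem hw)
        have h2 : ‖x - e‖ ≤ r := hx.2
        have h3 : dist x w ≤ ‖x - e‖ + ‖e - w‖ := by
          rw [dist_eq_norm]
          calc ‖x - w‖ = ‖(x - e) + (e - w)‖ := by rw [sub_add_sub_cancel]
            _ ≤ ‖x - e‖ + ‖e - w‖ := norm_add_le _ _
        linarith
      refine ⟨Fin.snoc τ e, ?_, ?_⟩
      · intro i
        refine Fin.lastCases ?_ (fun j => ?_) i
        · rw [Fin.snoc_last]; exact heS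
        · rw [Fin.snoc_castSucc]; exact hτS j
      · intro i
        refine Fin.lastCases ?_ (fun j => ?_) i
        · intro w hw
          have himg : (Fin.snoc τ e : Fin (m+1) → EuclideanSpace ℝ (Fin d)) ''
              {l | l < Fin.last m} ⊆ (H : Set (EuclideanSpace ℝ (Fin d))) := by
            rintro y ⟨l, hl, rfl⟩
            obtain ⟨j, rfl⟩ := Fin.exists_castSucc_eq.2 (ne_of_lt hl)
            rw [Fin.snoc_castSucc]
            exact hVH (Submodule.subset_span (mem_range_self j))
          have hspan : Submodule.span ℝ ((Fin.snoc τ e : Fin (m+1) → EuclideanSpace ℝ (Fin d)) ''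
              {l | l < Fin.last m}) ≤ H := Submodule.span_le.2 himg
          rw [Fin.snoc_last]
          exact hworks w (hspan hw)
        · intro w hw
          have himg : (Fin.snoc τ e : Fin (m+1) → EuclideanSpace ℝ (Fin d)) ''
              {l | l < Fin.castSucc j} = τ '' {l | l < j} := by
            ext y
            constructor
            · rintro ⟨l, hl, rfl⟩
              have hne : l ≠ Fin.last m := by
                rintro rfl
                have := j.isLt
                simp [Fin.lt_def] at hl
                omega
              obtain ⟨l', rfl⟩ := Fin.exists_castSucc_eq.2 hne
              exact ⟨l', by simpa [Fin.castSucc_lt_castSucc_iff] using hl,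
                (Fin.snoc_castSucc (α := fun _ => EuclideanSpace ℝ (Fin d)) e τ l').symm⟩
            · rintro ⟨l', hl', rfl⟩
              exact ⟨Fin.castSucc l', Fin.castSucc_lt_castSucc_iff.2 hl',
                Fin.snoc_castSucc (α := fun _ => EuclideanSpace ℝ (Fin d)) e τ l'⟩
          rw [himg] at hw
          rw [Fin.snoc_castSucc]
          exact hτ j w hw
  obtain ⟨τ, hτS, hτ⟩ := main (k+1) le_rfl
  refine ⟨τ, hτS, ?_⟩
  set g : Fin (k+1) → EuclideanSpace ℝ (Fin d) := gramSchmidt ℝ τ with hgdef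
  have hg0 : g 0 = τ 0 := by
    have h := sub_gramSchmidt_mem_span τ 0
    have hemp : τ '' {l | l < (0 : Fin (k+1))} = ∅ := by
      simp [Set.eq_empty_iff_forall_notMem]
    rw [hemp, Submodule.span_empty, Submodule.mem_bot, sub_eq_zero] at h
    exact h.symm
  have hgi : ∀ i, ρ' ≤ ‖g i‖ := by
    intro i
    have h := hτ i _ (sub_gramSchmidt_mem_span τ i)
    simpa using h
  rw [gramVol_eq_prod]
  have hprod : ρ' ^ k ≤ ∏ i, ‖g i‖ := by
    rw [Fin.prod_univ_succ]
    have h0 : ‖g 0‖ = 1 := by rw [hg0]; exact hS _ (hτS 0)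
    rw [h0, one_mul]
    calc ρ' ^ k = ∏ _i : Fin k, ρ' := by
          rw [Finset.prod_const, Finset.card_univ, Fintype.card_fin]
      _ ≤ ∏ i : Fin k, ‖g i.succ‖ :=
          Finset.prod_le_prod (fun _ _ => hρ'nonneg) (fun i _ => hgi i.succ)
  have hfinal : (999 / 1000 : ℝ) * ρ ^ k ≤ ρ' ^ k := by
    have hkc : (k:ℝ) * c ≤ 1/1000 := by
      rw [hcdef, mul_one_div, div_le_div_iff₀ hd0 (by norm_num)]
      have : (k:ℝ) ≤ (d:ℝ) := by exact_mod_cast (by omega : k ≤ d)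
      nlinarith
    have hbern : 1 - (k:ℝ) * c ≤ (1 - c) ^ k := by
      have h := one_add_mul_le_pow (a := -c) (by nlinarith) k
      calc 1 - (k:ℝ) * c = 1 + k * (-c) := by ring
        _ ≤ (1 + (-c)) ^ k := h
        _ = (1 - c) ^ k := by ring_nf
    have h999 : (999/1000 : ℝ) ≤ (1 - c) ^ k := by linarith
    have hρk : (0:ℝ) ≤ ρ ^ k := by positivity
    calc (999 / 1000 : ℝ) * ρ ^ k ≤ (1 - c) ^ k * ρ ^ k := by nlinarith
      _ = ρ' ^ k := by rw [hρ'def, mul_pow]; ring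
  linarith
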